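/- Let f be a set of monomials of degree 2 in R = k[x_1,...,x_n] and let P ⊂ k[T_1,...,T_m] be the toric (presentation) ideal of k[f] via T_j ↦ f_j. Then P is generated by the binomials p_w = T_{w^+} − T_{w^−} associated to the even closed walks w of the graph with loops G(f). -/

import Mathlib

noncomputable section

namespace PolarAlg

open MvPolynomial

variable (k : Type*) [Field k]

/-- The exponent vector of the degree-2 monomial attached to an edge (or loop) `e`. -/
def sym2Exp {n : ℕ} (e : Sym2 (Fin n)) : Fin n → ℕ :=
  Sym2.lift ⟨fun a b i => (if a = i then 1 else 0) + (if b = i then 1 else 0),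
    fun a b => funext fun i => add_comm _ _⟩ e

/-- The monomial with exponent vector `g`. -/
def mon {n : ℕ} (g : Fin n → ℕ) : MvPolynomial (Fin n) k := ∏ i, X i ^ g i

/-- The degree-2 monomial `f i` attached to the edge `ε i` of the graph of `f`. -/
def fmon {n : ℕ} {ι : Type*} (ε : ι → Sym2 (Fin n)) (i : ι) : MvPolynomial (Fin n) k :=
  mon k (sym2Exp (ε i))

/-- `(vtx, eidx)` is an (even, of length `2r`) closed walk in the graph `G(f)` whose edges are
indexed by `ι` via `ε` : the `j`-th edge of the walk is the edge `ε (eidx j)`, joining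
`vtx j` and `vtx (j+1)`. -/
def IsWalkIn {n r : ℕ} {ι : Type*} (ε : ι → Sym2 (Fin n)) (vtx : ZMod (2 * r) → Fin n)
    (eidx : ZMod (2 * r) → ι) : Prop :=
  ∀ j, ε (eidx j) = s(vtx j, vtx (j + 1))

/-- The exponent vector of the lcm `g` of the (distinct) edge monomials of a walk. -/
def supExp {n r : ℕ} (vtx : ZMod (2 * r) → Fin n) : Fin n → ℕ := fun l =>
  (Finset.range (2 * r)).sup fun j =>
    sym2Exp (s(vtx (j : ZMod (2 * r)), vtx ((j : ZMod (2 * r)) + 1))) l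

/-- The differential syzygy `z_w` attached to an even closed walk `w = (vtx, eidx)`:
its `i`-th coordinate is the sum of the alternating terms `± g/g_j` over the positions `j`
at which the walk traverses the edge `f i`. -/
def zw {n r : ℕ} {ι : Type*} [DecidableEq ι] (ε : ι → Sym2 (Fin n))
    (vtx : ZMod (2 * r) → Fin n) (eidx : ZMod (2 * r) → ι) : ι → MvPolynomial (Fin n) k :=
  fun i => ∑ j ∈ Finset.range (2 * r),
    if eidx (j : ZMod (2 * r)) = i then
      (-1 : MvPolynomial (Fin n) k) ^ j * mon k fun l => supExp vtx l - sym2Exp (ε i) l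
    else 0

/-- The binomial `p_w = T_{w⁺} - T_{w⁻}` attached to an even closed walk. -/
def pw {r : ℕ} {ι : Type*} (eidx : ZMod (2 * r) → ι) : MvPolynomial ι k :=
  (∏ j ∈ (Finset.range (2 * r)).filter (fun j => Even j), X (eidx (j : ZMod (2 * r)))) -
    ∏ j ∈ (Finset.range (2 * r)).filter (fun j => ¬ Even j), X (eidx (j : ZMod (2 * r)))

/-- The differential syzygy module `Z` of `f`, as the set of syzygies of the transposed
Jacobian module: vectors `a` with `∑ i, a i · df i = 0`, i.e. `∑ i, a i ∂f i/∂x l = 0`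
for every `l`. -/
def Zset (n : ℕ) {ι : Type*} [Fintype ι] (ε : ι → Sym2 (Fin n)) :
    Set (ι → MvPolynomial (Fin n) k) :=
  {a | ∀ l : Fin n, ∑ i, a i * pderiv l (fmon k ε i) = 0}

/-- The generators of the polar syzygy module: the `T`-gradients of the polynomial
relations of `f`, evaluated at `f`. -/
def polarSet (n : ℕ) {ι : Type*} [Fintype ι] (ε : ι → Sym2 (Fin n)) :
    Set (ι → MvPolynomial (Fin n) k) :=
  {v | ∃ F : MvPolynomial ι k, aeval (fmon k ε) F = 0 ∧
    v = fun i => aeval (fmon k ε) (pderiv i F)}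

/-- `f` is polarizable: the polar syzygy module `P` equals the differential syzygy module
`Z` (the inclusion `P ⊆ Z` always holds, by the chain rule). -/
def Polarizable (n : ℕ) {ι : Type*} [Fintype ι] (ε : ι → Sym2 (Fin n)) : Prop :=
  Zset k n ε ⊆ ↑(Submodule.span (MvPolynomial (Fin n) k) (polarSet k n ε))

end PolarAlg

namespace PolarAux

open PolarAlg MvPolynomial Finset

variable {k : Type*} [Field k] {n m : ℕ}

/-- characteristic exponent vector of a vertex -/
def chi (a : Fin n) : Fin n → ℕ := fun i => if a = i then 1 else 0

lemma sym2Exp_mk (a b : Fin n) (l : Fin n) : sym2Exp s(a, b) l = chi a l + chi b l := rfl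

lemma mem_iff_pos {z : Sym2 (Fin n)} {l : Fin n} : l ∈ z ↔ 0 < sym2Exp z l := by
  induction z using Sym2.ind with
  | _ a b =>
    rw [Sym2.mem_iff]
    show _ ↔ 0 < sym2Exp s(a,b) l
    rw [sym2Exp_mk]
    unfold chi
    by_cases ha : a = l <;> by_cases hb : b = l <;> simp [ha, hb] <;> omega

def degAt (ε : Fin m → Sym2 (Fin n)) (S : Multiset (Fin m)) (l : Fin n) : ℕ :=
  (S.map fun i => sym2Exp (ε i) l).sum

@[simp] lemma degAt_zero (ε : Fin m → Sym2 (Fin n)) (l : Fin n) : degAt ε 0 l = 0 := rfl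

@[simp] lemma degAt_cons (ε : Fin m → Sym2 (Fin n)) (i : Fin m) (S : Multiset (Fin m)) (l : Fin n) :
    degAt ε (i ::ₘ S) l = sym2Exp (ε i) l + degAt ε S l := by
  simp [degAt]

@[simp] lemma degAt_add (ε : Fin m → Sym2 (Fin n)) (S T : Multiset (Fin m)) (l : Fin n) :
    degAt ε (S + T) l = degAt ε S l + degAt ε T l := by
  simp [degAt]

lemma exists_of_degAt_pos (ε : Fin m → Sym2 (Fin n)) {S : Multiset (Fin m)} {l : Fin n}
    (h : 0 < degAt ε S l) : ∃ e ∈ S, l ∈ ε e := by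
  by_contra hc
  push_neg at hc
  have : degAt ε S l = 0 := by
    apply Multiset.sum_eq_zero
    intro x hx
    obtain ⟨e, he, rfl⟩ := Multiset.mem_map.1 hx
    have := hc e he
    rw [mem_iff_pos] at this
    omega
  omega

lemma degAt_pos_of_mem (ε : Fin m → Sym2 (Fin n)) {S : Multiset (Fin m)} {e : Fin m}
    (he : e ∈ S) {l : Fin n} (hl : l ∈ ε e) : 0 < degAt ε S l := by
  classical
  rw [← Multiset.cons_erase he, degAt_cons]
  rw [mem_iff_pos] at hl
  omega

lemma eq_zero_of_degAt (ε : Fin m → Sym2 (Fin n)) {S : Multiset (Fin m)}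
    (h : ∀ l, degAt ε S l = 0) : S = 0 := by
  by_contra hS
  obtain ⟨e, he⟩ := Multiset.exists_mem_of_ne_zero hS
  have hm : (Quot.out (ε e)).1 ∈ ε e := Sym2.out_fst_mem _
  have := degAt_pos_of_mem ε he hm
  have := h (Quot.out (ε e)).1
  omega

/-- product of `T`-variables over a multiset of edge indices -/
def Tprod (k : Type*) [Field k] (S : Multiset (Fin m)) : MvPolynomial (Fin m) k :=
  (S.map X).prod

@[simp] lemma Tprod_zero : Tprod k (0 : Multiset (Fin m)) = 1 := rfl

@[simp] lemma Tprod_cons (i : Fin m) (S : Multiset (Fin m)) :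
    Tprod k (i ::ₘ S) = X i * Tprod k S := by simp [Tprod]

lemma Tprod_add (S T : Multiset (Fin m)) : Tprod k (S + T) = Tprod k S * Tprod k T := by
  simp [Tprod]

lemma mon_add (g h : Fin n → ℕ) :
    mon k (fun l => g l + h l) = mon k g * mon k h := by
  simp [mon, pow_add, Finset.prod_mul_distrib]

lemma mon_sum {α : Type*} (s : Finset α) (h : α → Fin n → ℕ) :
    mon k (fun l => ∑ j ∈ s, h j l) = ∏ j ∈ s, mon k (h j) := by
  classical
  induction s using Finset.cons_induction with
  | empty => simp [mon]
  | cons a s ha ih =>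
    rw [Finset.prod_cons, ← ih, ← mon_add]
    congr 1
    funext l
    rw [Finset.sum_cons]

lemma mon_eq_monomial (g : Fin n → ℕ) :
    mon k g = monomial (Finsupp.equivFunOnFinite.symm g) 1 := by
  rw [monomial_eq, C_1, one_mul, Finsupp.prod]
  rw [mon]
  refine (Finset.prod_subset (Finset.subset_univ _) ?_).symm
  intro i _ hi
  have : (Finsupp.equivFunOnFinite.symm g) i = 0 := by
    simpa using Finsupp.notMem_support_iff.1 hi
  simp only [Finsupp.coe_equivFunOnFinite_symm] at this ⊢
  simp [this]

lemma mon_inj {g h : Fin n → ℕ} (e : mon k g = mon k h) : g = h := by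
  rw [mon_eq_monomial, mon_eq_monomial] at e
  have := monomial_left_injective (one_ne_zero (α := k)) e
  exact Finsupp.equivFunOnFinite.symm.injective this

lemma aeval_Tprod (ε : Fin m → Sym2 (Fin n)) (S : Multiset (Fin m)) :
    aeval (fmon k ε) (Tprod k S) = mon k (degAt ε S) := by
  induction S using Multiset.induction with
  | empty => simp [mon]
  | cons i S ih =>
    rw [Tprod_cons, map_mul, ih, aeval_X]
    show mon k (sym2Exp (ε i)) * _ = _
    rw [← mon_add]
    congr 1
    funext l
    simp

lemma Tprod_toMultiset (u : Fin m →₀ ℕ) :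
    Tprod k u.toMultiset = monomial u 1 := by
  induction u using Finsupp.induction with
  | zero => simp [Tprod]
  | single_add a e f ha he ih =>
    rw [Finsupp.toMultiset_add, Tprod_add, ih, monomial_single_add,
      Finsupp.toMultiset_single, Multiset.nsmul_singleton]
    congr 1
    simp [Tprod, Multiset.map_replicate, Multiset.prod_replicate]

/-- parity rearrangement of walk sums -/
lemma parity_sum {r : ℕ} (f g : ℕ → ℕ)
    (hfg : ∀ j < 2 * r, f j = g j + g (j + 1)) (hg : g (2 * r) = g 0) :
    (∑ j ∈ (Finset.range (2 * r)).filter (fun j => j % 2 = 0), f j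
      = ∑ j ∈ Finset.range (2 * r), g j) ∧
    (∑ j ∈ (Finset.range (2 * r)).filter (fun j => j % 2 = 1), f j
      = ∑ j ∈ Finset.range (2 * r), g j) := by
  have key : ∀ j, j < 2 * r → (j + 1) % (2 * r) = if j + 1 = 2 * r then 0 else j + 1 := by
    intro j hj
    split
    · next h => rw [h, Nat.mod_self]
    · next h => exact Nat.mod_eq_of_lt (by omega)
  constructor
  · rw [Finset.sum_congr rfl (g := fun j => g j + g (j + 1))
      (fun j hj => hfg j (by simp at hj; omega)), Finset.sum_add_distrib]
    have h2 : ∑ j ∈ (Finset.range (2 * r)).filter (fun j => j % 2 = 0), g (j + 1)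
        = ∑ j ∈ (Finset.range (2 * r)).filter (fun j => j % 2 = 1), g j := by
      refine Finset.sum_nbij' (fun j => j + 1) (fun j => j - 1) ?_ ?_ ?_ ?_ ?_ <;>
        intro a ha <;> simp only [Finset.mem_filter, Finset.mem_range] at ha ⊢
      · omega
      · omega
      · omega
      · omega
    rw [h2]
    have := Finset.sum_filter_add_sum_filter_not (Finset.range (2 * r))
      (fun j => j % 2 = 0) g
    have hng : (Finset.range (2 * r)).filter (fun j => ¬ j % 2 = 0)
        = (Finset.range (2 * r)).filter (fun j => j % 2 = 1) := by
      apply Finset.filter_congr; intro j _; omega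
    rw [hng] at this
    omega
  · rw [Finset.sum_congr rfl (g := fun j => g j + g (j + 1))
      (fun j hj => hfg j (by simp at hj; omega)), Finset.sum_add_distrib]
    have h2 : ∑ j ∈ (Finset.range (2 * r)).filter (fun j => j % 2 = 1), g (j + 1)
        = ∑ j ∈ (Finset.range (2 * r)).filter (fun j => j % 2 = 0), g j := by
      have hstep : ∀ j ∈ (Finset.range (2 * r)).filter (fun j => j % 2 = 1),
          g (j + 1) = g ((j + 1) % (2 * r)) := by
        intro j hj
        simp only [Finset.mem_filter, Finset.mem_range] at hj
        rw [key j hj.1]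
        split
        · next h => rw [h, hg]
        · rfl
      rw [Finset.sum_congr rfl hstep]
      refine Finset.sum_nbij' (fun j => (j + 1) % (2 * r))
        (fun j => if j = 0 then 2 * r - 1 else j - 1) ?_ ?_ ?_ ?_ ?_ <;>
        intro a ha <;> simp only [Finset.mem_filter, Finset.mem_range] at ha ⊢
      · rw [key a ha.1]; split <;> omega
      · split <;> omega
      · rcases eq_or_ne (a + 1) (2 * r) with h | h
        · rw [key a ha.1, if_pos h, if_pos rfl]; omega
        · rw [key a ha.1, if_neg h, if_neg (by omega)]; omega
      · rcases eq_or_ne a 0 with h | h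
        · rw [if_pos h, key (2 * r - 1) (by omega), if_pos (by omega)]; omega
        · rw [if_neg h, key (a - 1) (by omega), if_neg (by omega)]; omega
    rw [h2]
    have := Finset.sum_filter_add_sum_filter_not (Finset.range (2 * r))
      (fun j => j % 2 = 0) g
    have hng : (Finset.range (2 * r)).filter (fun j => ¬ j % 2 = 0)
        = (Finset.range (2 * r)).filter (fun j => j % 2 = 1) := by
      apply Finset.filter_congr; intro j _; omega
    rw [hng] at this
    omega


section PosM

variable {α : Type*}

/-- the multiset of values `E j` over positions `j < L` of parity `p`. -/
def posM (L p : ℕ) (E : ℕ → α) : Multiset α :=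
  ((Finset.range L).filter (fun j => j % 2 = p)).val.map E

@[simp] lemma posM_zero (p : ℕ) (E : ℕ → α) : posM 0 p E = 0 := rfl

lemma posM_succ_top (L p : ℕ) (E : ℕ → α) :
    posM (L + 1) p E = if L % 2 = p then E L ::ₘ posM L p E else posM L p E := by
  unfold posM
  rw [Finset.range_add_one, Finset.filter_insert]
  split
  · rw [Finset.insert_val_of_notMem (by simp), Multiset.map_cons]
  · rfl

lemma posM_shift0 (L : ℕ) (E : ℕ → α) :
    posM (L + 1) 0 E = E 0 ::ₘ posM L 1 (fun j => E (j + 1)) := by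
  induction L with
  | zero =>
    rw [posM_succ_top]
    simp
  | succ L ih =>
    rw [posM_succ_top, posM_succ_top L 1]
    by_cases h : (L + 1) % 2 = 0
    · rw [if_pos h, if_pos (by omega), ih, Multiset.cons_swap]
    · rw [if_neg h, if_neg (by omega), ih]

lemma posM_shift1 (L : ℕ) (E : ℕ → α) :
    posM (L + 1) 1 E = posM L 0 (fun j => E (j + 1)) := by
  induction L with
  | zero =>
    rw [posM_succ_top]
    simp
  | succ L ih =>
    rw [posM_succ_top, posM_succ_top L 0]
    by_cases h : (L + 1) % 2 = 1
    · rw [if_pos h, if_pos (by omega), ih]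
    · rw [if_neg h, if_neg (by omega), ih]

lemma posM_congr {L p : ℕ} {E E' : ℕ → α} (h : ∀ j < L, E j = E' j) :
    posM L p E = posM L p E' := by
  unfold posM
  apply Multiset.map_congr rfl
  intro j hj
  have hj' : j ∈ (Finset.range L).filter (fun j => j % 2 = p) := Finset.mem_val.mp hj
  exact h j (Finset.mem_range.1 (Finset.mem_filter.1 hj').1)

end PosM

lemma degAt_posM (ε : Fin m → Sym2 (Fin n)) (L p : ℕ) (E : ℕ → Fin m) (l : Fin n) :
    degAt ε (posM L p E) l
      = ∑ j ∈ (Finset.range L).filter (fun j => j % 2 = p), sym2Exp (ε (E j)) l := by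
  unfold degAt posM Finset.sum
  rw [Multiset.map_map]
  rfl

lemma Tprod_posM (L p : ℕ) (E : ℕ → Fin m) :
    Tprod k (posM L p E)
      = ∏ j ∈ (Finset.range L).filter (fun j => j % 2 = p), (X (E j) : MvPolynomial (Fin m) k) := by
  unfold Tprod posM Finset.prod
  rw [Multiset.map_map]
  rfl

lemma path_lemma (ε : Fin m → Sym2 (Fin n)) :
    ∀ (N : ℕ) (v u : Multiset (Fin m)) (a0 b : Fin n), Multiset.card v ≤ N →
    (∀ l, degAt ε v l = degAt ε u l + chi a0 l + chi b l) →
    ∃ (s : ℕ) (E : ℕ → Fin m) (V : ℕ → Fin n),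
      V 0 = b ∧ V (2 * s + 1) = a0 ∧
      (∀ j < 2 * s + 1, ε (E j) = s(V j, V (j + 1))) ∧
      posM (2 * s + 1) 0 E ≤ v ∧ posM (2 * s + 1) 1 E ≤ u := by
  classical
  intro N
  induction N with
  | zero =>
    intro v u a0 b hcard hdeg
    exfalso
    have hv : v = 0 := Multiset.card_eq_zero.1 (le_antisymm hcard (Nat.zero_le _))
    have h := hdeg b
    rw [hv] at h
    have hb : chi b b = 1 := by simp [chi]
    simp only [degAt_zero] at h
    omega
  | succ N ih =>
    intro v u a0 b hcard hdeg
    have hvb : 0 < degAt ε v b := by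
      have h := hdeg b
      have hb : chi b b = 1 := by simp [chi]
      omega
    obtain ⟨e, hev, hbe⟩ := exists_of_degAt_pos ε hvb
    set c := Sym2.Mem.other hbe with hc
    have hec : ε e = s(b, c) := (Sym2.other_spec hbe).symm
    have hdegv : ∀ l, degAt ε v l = chi b l + chi c l + degAt ε (v.erase e) l := by
      intro l
      conv_lhs => rw [← Multiset.cons_erase hev]
      rw [degAt_cons, hec, sym2Exp_mk]
    by_cases hca : c = a0
    · refine ⟨0, fun _ => e, fun j => if j = 0 then b else a0, by simp, by simp, ?_, ?_, ?_⟩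
      · intro j hj
        have hj0 : j = 0 := by omega
        subst hj0
        simpa [hca] using hec
      · have h1 : posM (2 * 0 + 1) 0 (fun _ => e) = {e} := by
          show posM (0 + 1) 0 _ = _
          rw [posM_shift0]
          simp
        rw [h1]
        exact Multiset.singleton_le.2 hev
      · have h1 : posM (2 * 0 + 1) 1 (fun _ => e) = 0 := by
          show posM (0 + 1) 1 _ = _
          rw [posM_shift1]
          rfl
        rw [h1]
        exact Multiset.zero_le _
    · have hdeg' : ∀ l, degAt ε (v.erase e) l + chi c l = degAt ε u l + chi a0 l := by
        intro l
        have h1 := hdeg l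
        have h2 := hdegv l
        omega
      have huc : 0 < degAt ε u c := by
        have h := hdeg' c
        have h1 : chi c c = 1 := by simp [chi]
        have h2 : chi a0 c = 0 := by simp [chi, Ne.symm hca]
        omega
      obtain ⟨e', heu, hce⟩ := exists_of_degAt_pos ε huc
      set d := Sym2.Mem.other hce with hd
      have hec' : ε e' = s(c, d) := (Sym2.other_spec hce).symm
      have hdegu : ∀ l, degAt ε u l = chi c l + chi d l + degAt ε (u.erase e') l := by
        intro l
        conv_lhs => rw [← Multiset.cons_erase heu]
        rw [degAt_cons, hec', sym2Exp_mk]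
      have hrec : ∀ l, degAt ε (v.erase e) l = degAt ε (u.erase e') l + chi a0 l + chi d l := by
        intro l
        have h1 := hdeg' l
        have h2 := hdegu l
        omega
      have hcard' : Multiset.card (v.erase e) ≤ N := by
        rw [Multiset.card_erase_of_mem hev]
        have h0 : 0 < Multiset.card v := Multiset.card_pos_iff_exists_mem.2 ⟨e, hev⟩
        rw [Nat.pred_eq_sub_one]
        omega
      obtain ⟨s, E, V, hV0, hVend, hwalk, hle_v, hle_u⟩ :=
        ih (v.erase e) (u.erase e') a0 d hcard' hrec
      set E'' : ℕ → Fin m := fun j => if j = 0 then e else if j = 1 then e' else E (j - 2)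
        with hE''
      set V'' : ℕ → Fin n := fun j => if j = 0 then b else if j = 1 then c else V (j - 2)
        with hV''
      have hE2 : ∀ j, E'' (j + 2) = E j := by
        intro j
        rw [hE'']
        simp only []
        rw [if_neg (by omega), if_neg (by omega)]
        congr 1
      have hV2 : ∀ j, V'' (j + 2) = V j := by
        intro j
        rw [hV'']
        simp only []
        rw [if_neg (by omega), if_neg (by omega)]
        congr 1
      have hE''0 : E'' 0 = e := rfl
      have hE''1 : E'' 1 = e' := rfl
      have hV''0 : V'' 0 = b := rfl
      have hV''1 : V'' 1 = c := rfl
      refine ⟨s + 1, E'', V'', hV''0, ?_, ?_, ?_, ?_⟩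
      · have h1 : 2 * (s + 1) + 1 = (2 * s + 1) + 2 := by ring
        rw [h1, hV2]
        exact hVend
      · intro j hj
        match j with
        | 0 =>
          rw [hE''0, hV''0, hV''1]
          exact hec
        | 1 =>
          rw [hE''1, hV''1]
          have : V'' 2 = d := by
            have := hV2 0
            rw [this, hV0]
          rw [this]
          exact hec'
        | (j + 2) =>
          have hj' : j < 2 * s + 1 := by omega
          rw [hE2, hV2]
          have h3 : V'' (j + 2 + 1) = V (j + 1) := hV2 (j + 1)
          rw [show j + 2 + 1 = (j + 1) + 2 from by ring, hV2]
          exact hwalk j hj'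
      · have h1 : 2 * (s + 1) + 1 = ((2 * s + 1) + 1) + 1 := by ring
        rw [h1, posM_shift0, posM_shift1]
        have h2 : posM (2 * s + 1) 0 (fun j => E'' (j + 1 + 1)) = posM (2 * s + 1) 0 E :=
          posM_congr (fun j _ => by rw [show j + 1 + 1 = j + 2 from rfl, hE2])
        rw [h2, hE''0]
        calc e ::ₘ posM (2 * s + 1) 0 E ≤ e ::ₘ v.erase e := Multiset.cons_le_cons _ hle_v
          _ = v := Multiset.cons_erase hev
      · have h1 : 2 * (s + 1) + 1 = ((2 * s + 1) + 1) + 1 := by ring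
        rw [h1, posM_shift1, posM_shift0]
        have h2 : posM (2 * s + 1) 1 (fun j => E'' (j + 1 + 1)) = posM (2 * s + 1) 1 E :=
          posM_congr (fun j _ => by rw [show j + 1 + 1 = j + 2 from rfl, hE2])
        rw [h2]
        have h3 : E'' (0 + 1) = e' := hE''1
        rw [h3]
        calc e' ::ₘ posM (2 * s + 1) 1 E ≤ e' ::ₘ u.erase e' := Multiset.cons_le_cons _ hle_u
          _ = u := Multiset.cons_erase heu

lemma walk_lemma (ε : Fin m → Sym2 (Fin n)) {u v : Multiset (Fin m)} (hu : u ≠ 0)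
    (hdeg : ∀ l, degAt ε u l = degAt ε v l) :
    ∃ (r : ℕ), 1 ≤ r ∧ ∃ (E : ℕ → Fin m) (V : ℕ → Fin n),
      V (2 * r) = V 0 ∧
      (∀ j < 2 * r, ε (E j) = s(V j, V (j + 1))) ∧
      posM (2 * r) 0 E ≤ u ∧ posM (2 * r) 1 E ≤ v ∧ posM (2 * r) 0 E ≠ 0 := by
  classical
  obtain ⟨i0, hi0⟩ := Multiset.exists_mem_of_ne_zero hu
  have hmem : (Quot.out (ε i0)).1 ∈ ε i0 := Sym2.out_fst_mem _
  set a0 := (Quot.out (ε i0)).1 with ha0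
  set a1 := Sym2.Mem.other hmem with ha1
  have heq : ε i0 = s(a0, a1) := (Sym2.other_spec hmem).symm
  have hdegu : ∀ l, degAt ε u l = chi a0 l + chi a1 l + degAt ε (u.erase i0) l := by
    intro l
    conv_lhs => rw [← Multiset.cons_erase hi0]
    rw [degAt_cons, heq, sym2Exp_mk]
  have hG : ∀ l, degAt ε v l = degAt ε (u.erase i0) l + chi a0 l + chi a1 l := by
    intro l
    have h1 := hdeg l
    have h2 := hdegu l
    omega
  obtain ⟨s, E, V, hV0, hVend, hwalk, hle_v, hle_u⟩ :=
    path_lemma ε (Multiset.card v) v (u.erase i0) a0 a1 le_rfl hG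
  set E' : ℕ → Fin m := fun j => if j = 0 then i0 else E (j - 1) with hE'
  set V' : ℕ → Fin n := fun j => if j = 0 then a0 else V (j - 1) with hV'
  have hE'succ : ∀ j, E' (j + 1) = E j := by
    intro j
    rw [hE']
    simp only []
    rw [if_neg (by omega)]
    congr 1
  have hV'succ : ∀ j, V' (j + 1) = V j := by
    intro j
    rw [hV']
    simp only []
    rw [if_neg (by omega)]
    congr 1
  have hE'0 : E' 0 = i0 := rfl
  have hV'0 : V' 0 = a0 := rfl
  refine ⟨s + 1, by omega, E', V', ?_, ?_, ?_, ?_, ?_⟩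
  · rw [show 2 * (s + 1) = (2 * s + 1) + 1 from by ring, hV'succ, hV'0]
    exact hVend
  · intro j hj
    match j with
    | 0 =>
      rw [hE'0, hV'0, hV'succ 0, hV0]
      exact heq
    | (j + 1) =>
      have hj' : j < 2 * s + 1 := by omega
      rw [hE'succ, hV'succ, show j + 1 + 1 = (j + 1) + 1 from rfl, hV'succ]
      exact hwalk j hj'
  · rw [show 2 * (s + 1) = (2 * s + 1) + 1 from by ring, posM_shift0]
    have h2 : posM (2 * s + 1) 1 (fun j => E' (j + 1)) = posM (2 * s + 1) 1 E :=
      posM_congr (fun j _ => hE'succ j)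
    rw [h2, hE'0]
    calc i0 ::ₘ posM (2 * s + 1) 1 E ≤ i0 ::ₘ u.erase i0 := Multiset.cons_le_cons _ hle_u
      _ = u := Multiset.cons_erase hi0
  · rw [show 2 * (s + 1) = (2 * s + 1) + 1 from by ring, posM_shift1]
    have h2 : posM (2 * s + 1) 0 (fun j => E' (j + 1)) = posM (2 * s + 1) 0 E :=
      posM_congr (fun j _ => hE'succ j)
    rw [h2]
    exact hle_v
  · rw [show 2 * (s + 1) = (2 * s + 1) + 1 from by ring, posM_shift0]
    exact Multiset.cons_ne_zero


/-- the span of the walk binomials -/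
def wSpan (k : Type*) [Field k] {n m : ℕ} (ε : Fin m → Sym2 (Fin n)) :
    Ideal (MvPolynomial (Fin m) k) :=
  Ideal.span {p : MvPolynomial (Fin m) k |
    ∃ r : ℕ, 1 ≤ r ∧ ∃ (vtx : ZMod (2 * r) → Fin n) (eidx : ZMod (2 * r) → Fin m),
      IsWalkIn ε vtx eidx ∧ p = pw k eidx}

lemma pw_eq_prods {r : ℕ} (eidx : ZMod (2 * r) → Fin m) :
    pw k eidx =
      (∏ j ∈ (Finset.range (2 * r)).filter (fun j => j % 2 = 0),
        (X (eidx (j : ZMod (2 * r))) : MvPolynomial (Fin m) k))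
      - ∏ j ∈ (Finset.range (2 * r)).filter (fun j => j % 2 = 1),
          (X (eidx (j : ZMod (2 * r))) : MvPolynomial (Fin m) k) := by
  unfold pw
  have hs0 : (Finset.range (2 * r)).filter (fun j => Even j)
      = (Finset.range (2 * r)).filter (fun j => j % 2 = 0) :=
    Finset.filter_congr (fun j _ => by rw [Nat.even_iff])
  have hs1 : (Finset.range (2 * r)).filter (fun j => ¬ Even j)
      = (Finset.range (2 * r)).filter (fun j => j % 2 = 1) :=
    Finset.filter_congr (fun j _ => by rw [Nat.not_even_iff])
  rw [hs0, hs1]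

lemma binom_mem (ε : Fin m → Sym2 (Fin n)) :
    ∀ (N : ℕ) (u v : Multiset (Fin m)), Multiset.card u ≤ N →
    (∀ l, degAt ε u l = degAt ε v l) →
    Tprod k u - Tprod k v ∈ wSpan k ε := by
  classical
  intro N
  induction N with
  | zero =>
    intro u v hcard hdeg
    have hu : u = 0 := Multiset.card_eq_zero.1 (le_antisymm hcard (Nat.zero_le _))
    subst hu
    have hv : v = 0 := eq_zero_of_degAt ε (fun l => by
      have h := hdeg l; simp only [degAt_zero] at h; omega)
    subst hv
    simp
  | succ N ih =>
    intro u v hcard hdeg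
    by_cases hu : u = 0
    · subst hu
      have hv : v = 0 := eq_zero_of_degAt ε (fun l => by
        have h := hdeg l; simp only [degAt_zero] at h; omega)
      subst hv
      simp
    · obtain ⟨r, hr, E, V, hclose, hwalk, hWu, hWv, hWne⟩ := walk_lemma ε hu hdeg
      haveI : NeZero (2 * r) := ⟨by omega⟩
      haveI : Fact (1 < 2 * r) := ⟨by omega⟩
      set vtx : ZMod (2 * r) → Fin n := fun j => V j.val with hvtx
      set eidx : ZMod (2 * r) → Fin m := fun j => E j.val with heidx
      have hwin : IsWalkIn ε vtx eidx := by
        intro j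
        have hjlt : j.val < 2 * r := ZMod.val_lt j
        have h := hwalk j.val hjlt
        show ε (E j.val) = s(V j.val, V (j + 1).val)
        rw [h]
        congr 1
        have hval : (j + 1).val = (j.val + 1) % (2 * r) := by
          rw [ZMod.val_add, ZMod.val_one]
        rcases eq_or_ne (j.val + 1) (2 * r) with h1 | h1
        · rw [hval, h1, Nat.mod_self, hclose]
        · rw [hval, Nat.mod_eq_of_lt (by omega)]
      have hpw : pw k eidx = Tprod k (posM (2 * r) 0 E) - Tprod k (posM (2 * r) 1 E) := by
        rw [pw_eq_prods, Tprod_posM, Tprod_posM]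
        congr 1
        · apply Finset.prod_congr rfl
          intro j hj
          simp only [Finset.mem_filter, Finset.mem_range] at hj
          show (X (E (ZMod.val ((j : ℕ) : ZMod (2 * r)))) : MvPolynomial (Fin m) k) = X (E j)
          rw [ZMod.val_natCast_of_lt hj.1]
        · apply Finset.prod_congr rfl
          intro j hj
          simp only [Finset.mem_filter, Finset.mem_range] at hj
          show (X (E (ZMod.val ((j : ℕ) : ZMod (2 * r)))) : MvPolynomial (Fin m) k) = X (E j)
          rw [ZMod.val_natCast_of_lt hj.1]
      set Wp := posM (2 * r) 0 E with hWp
      set Wm := posM (2 * r) 1 E with hWm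
      have hdegW : ∀ l, degAt ε Wp l = degAt ε Wm l := by
        intro l
        rw [hWp, hWm, degAt_posM, degAt_posM]
        have hpar := parity_sum (r := r) (fun j => sym2Exp (ε (E j)) l)
          (fun j => chi (V j) l)
          (fun j hj => by
            show sym2Exp (ε (E j)) l = chi (V j) l + chi (V (j + 1)) l
            rw [hwalk j hj, sym2Exp_mk])
          (by show chi (V (2 * r)) l = chi (V 0) l; rw [hclose])
        have h1 := hpar.1
        have h2 := hpar.2
        beta_reduce at h1 h2
        omega
      have hpwmem : Tprod k Wp - Tprod k Wm ∈ wSpan k ε := by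
        rw [← hpw]
        exact Ideal.subset_span ⟨r, hr, vtx, eidx, hwin, rfl⟩
      have hWpcard : 0 < Multiset.card Wp := Multiset.card_pos.2 hWne
      have hucard : 0 < Multiset.card u := Multiset.card_pos.2 hu
      have hcard' : Multiset.card (u - Wp) ≤ N := by
        rw [Multiset.card_sub hWu]
        omega
      have hdeg' : ∀ l, degAt ε (u - Wp) l = degAt ε (v - Wm) l := by
        intro l
        have h1 : degAt ε (u - Wp) l + degAt ε Wp l = degAt ε u l := by
          rw [← degAt_add]
          congr 1
          exact tsub_add_cancel_of_le hWu
        have h2 : degAt ε (v - Wm) l + degAt ε Wm l = degAt ε v l := by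
          rw [← degAt_add]
          congr 1
          exact tsub_add_cancel_of_le hWv
        have h3 := hdeg l
        have h4 := hdegW l
        omega
      have hrest := ih (u - Wp) (v - Wm) hcard' hdeg'
      have hiden : Tprod k u - Tprod k v
          = Tprod k (u - Wp) * (Tprod k Wp - Tprod k Wm)
            + Tprod k Wm * (Tprod k (u - Wp) - Tprod k (v - Wm)) := by
        have h1 : Tprod k u = Tprod k (u - Wp) * Tprod k Wp := by
          rw [← Tprod_add]
          congr 1
          exact (tsub_add_cancel_of_le hWu).symm
        have h2 : Tprod k v = Tprod k (v - Wm) * Tprod k Wm := by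
          rw [← Tprod_add]
          congr 1
          exact (tsub_add_cancel_of_le hWv).symm
        rw [h1, h2]
        ring
      rw [hiden]
      exact add_mem (Ideal.mul_mem_left _ _ hpwmem) (Ideal.mul_mem_left _ _ hrest)

lemma pw_ker (ε : Fin m → Sym2 (Fin n)) {r : ℕ} (vtx : ZMod (2 * r) → Fin n)
    (eidx : ZMod (2 * r) → Fin m) (hwin : IsWalkIn ε vtx eidx) :
    aeval (fmon k ε) (pw k eidx) = 0 := by
  classical
  rw [pw_eq_prods, map_sub, map_prod, map_prod]
  simp only [aeval_X]
  have h0 := (mon_sum (k := k) ((Finset.range (2 * r)).filter (fun j => j % 2 = 0))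
    (fun j => sym2Exp (ε (eidx (j : ZMod (2 * r)))))).symm
  have h1 := (mon_sum (k := k) ((Finset.range (2 * r)).filter (fun j => j % 2 = 1))
    (fun j => sym2Exp (ε (eidx (j : ZMod (2 * r)))))).symm
  show (∏ j ∈ (Finset.range (2 * r)).filter (fun j => j % 2 = 0),
      mon k (sym2Exp (ε (eidx (j : ZMod (2 * r))))))
    - (∏ j ∈ (Finset.range (2 * r)).filter (fun j => j % 2 = 1),
      mon k (sym2Exp (ε (eidx (j : ZMod (2 * r)))))) = 0
  rw [h0, h1]
  have hfun : (fun l => ∑ j ∈ (Finset.range (2 * r)).filter (fun j => j % 2 = 0),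
        sym2Exp (ε (eidx (j : ZMod (2 * r)))) l)
      = (fun l => ∑ j ∈ (Finset.range (2 * r)).filter (fun j => j % 2 = 1),
        sym2Exp (ε (eidx (j : ZMod (2 * r)))) l) := by
    funext l
    have hpar := parity_sum (r := r)
      (fun j => sym2Exp (ε (eidx (j : ZMod (2 * r)))) l)
      (fun j => chi (vtx (j : ZMod (2 * r))) l)
      (fun j hj => by
        show sym2Exp (ε (eidx ((j : ℕ) : ZMod (2 * r)))) l
          = chi (vtx ((j : ℕ) : ZMod (2 * r))) l + chi (vtx (((j + 1 : ℕ)) : ZMod (2 * r))) l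
        rw [hwin ((j : ℕ) : ZMod (2 * r)), sym2Exp_mk]
        have hcast : (((j + 1 : ℕ)) : ZMod (2 * r)) = ((j : ℕ) : ZMod (2 * r)) + 1 := by
          push_cast
          ring
        rw [hcast])
      (by
        show chi (vtx ((2 * r : ℕ) : ZMod (2 * r))) l = chi (vtx ((0 : ℕ) : ZMod (2 * r))) l
        rw [ZMod.natCast_self]
        norm_num)
    have hp1 := hpar.1
    have hp2 := hpar.2
    beta_reduce at hp1 hp2
    omega
  rw [hfun, sub_self]

lemma ker_le (ε : Fin m → Sym2 (Fin n)) :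
    ∀ (N : ℕ) (F : MvPolynomial (Fin m) k), F.support.card ≤ N →
    aeval (fmon k ε) F = 0 → F ∈ wSpan k ε := by
  classical
  intro N
  induction N with
  | zero =>
    intro F hcard _
    have h1 : F.support = ∅ := Finset.card_eq_zero.1 (le_antisymm hcard (Nat.zero_le _))
    have h2 : F = 0 := support_eq_empty.1 h1
    simp [h2]
  | succ N ih =>
    intro F hcard hF
    by_cases hF0 : F = 0
    · simp [hF0]
    · obtain ⟨u, hu⟩ := support_nonempty.2 hF0
      set c := coeff u F with hcdef
      have hcne : c ≠ 0 := mem_support_iff.1 hu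
      set D : (Fin m →₀ ℕ) → (Fin n →₀ ℕ) :=
        fun w => Finsupp.equivFunOnFinite.symm (degAt ε w.toMultiset) with hD
      have haevalmon : ∀ (w : Fin m →₀ ℕ) (a : k),
          aeval (fmon k ε) (monomial w a) = monomial (D w) a := by
        intro w a
        have h1 : (monomial w a : MvPolynomial (Fin m) k) = C a * monomial w 1 := by
          rw [C_mul_monomial, mul_one]
        rw [h1, map_mul, ← Tprod_toMultiset, aeval_Tprod, mon_eq_monomial, aeval_C,
          MvPolynomial.algebraMap_eq, C_mul_monomial, mul_one]
      have hsum : ∑ w ∈ F.support, (monomial (D w) (coeff w F) : MvPolynomial (Fin n) k)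
          = 0 := by
        have hFsum := support_sum_monomial_coeff F
        calc ∑ w ∈ F.support, (monomial (D w) (coeff w F) : MvPolynomial (Fin n) k)
            = aeval (fmon k ε) (∑ w ∈ F.support, monomial w (coeff w F)) := by
              rw [map_sum]
              exact Finset.sum_congr rfl fun w _ => (haevalmon w _).symm
          _ = 0 := by rw [hFsum, hF]
      have hcoeffsum : ∑ w ∈ F.support, (if D w = D u then coeff w F else 0) = 0 := by
        have h := congrArg (coeff (D u)) hsum
        rw [coeff_sum] at h
        simpa [coeff_monomial] using h
      have hexists : ∃ w ∈ F.support, w ≠ u ∧ D w = D u := by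
        by_contra hc
        push_neg at hc
        have h : ∑ w ∈ F.support, (if D w = D u then coeff w F else 0) = c := by
          rw [Finset.sum_eq_single u]
          · rw [if_pos rfl]
          · intro w hw hwne
            rw [if_neg (hc w hw hwne)]
          · intro h
            exact absurd hu h
        rw [h] at hcoeffsum
        exact hcne hcoeffsum
      obtain ⟨v, hvs, hvne, hDv⟩ := hexists
      have hdeg : ∀ l, degAt ε u.toMultiset l = degAt ε v.toMultiset l := by
        have h := Finsupp.equivFunOnFinite.symm.injective hDv
        intro l
        exact (congrFun h l).symm
      have hbin : Tprod k u.toMultiset - Tprod k v.toMultiset ∈ wSpan k ε :=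
        binom_mem ε (Multiset.card u.toMultiset) _ _ le_rfl hdeg
      set B : MvPolynomial (Fin m) k := monomial u (1 : k) - monomial v 1 with hB
      have hBmem : B ∈ wSpan k ε := by
        rw [hB, ← Tprod_toMultiset, ← Tprod_toMultiset]
        exact hbin
      set F' := F - C c * B with hF'
      have hFdecomp : F = F' + C c * B := by rw [hF']; ring
      have haevalB : aeval (fmon k ε) B = 0 := by
        rw [hB, map_sub, haevalmon, haevalmon, hDv, sub_self]
      have hF'0 : aeval (fmon k ε) F' = 0 := by
        rw [hF', map_sub, map_mul, haevalB, hF, mul_zero, sub_zero]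
      have hsupp : F'.support ⊆ F.support.erase u := by
        intro w hw
        rw [Finset.mem_erase]
        rw [mem_support_iff] at hw
        have hcB : coeff w B = (if u = w then (1 : k) else 0) - (if v = w then 1 else 0) := by
          rw [hB, coeff_sub, coeff_monomial, coeff_monomial]
        have hcoeff : coeff w F' = coeff w F - c * coeff w B := by
          rw [hF', coeff_sub, coeff_C_mul]
        constructor
        · rintro rfl
          rw [hcoeff, hcB, if_pos rfl, if_neg (fun h => hvne h)] at hw
          simp [hcdef] at hw
        · by_contra hws
          have h0 : coeff w F = 0 := notMem_support_iff.1 hws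
          have hwv : v ≠ w := by rintro rfl; exact hws hvs
          have hwu : u ≠ w := by rintro rfl; exact hws hu
          rw [hcoeff, hcB, h0, if_neg hwu, if_neg hwv] at hw
          simp at hw
      have hcard' : F'.support.card ≤ N := by
        have h1 := Finset.card_le_card hsupp
        have h2 := Finset.card_erase_of_mem hu
        omega
      have hmem' := ih F' hcard' hF'0
      rw [hFdecomp]
      exact add_mem hmem' (Ideal.mul_mem_left _ _ hBmem)

end PolarAux

open PolarAlg MvPolynomial in
/-- Theorem 4.7 (first claim): the toric presentation ideal `P = ker(k[T] → k[f])` of the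
algebra generated by a set `f` of degree-2 monomials is generated by the binomials `p_w`
attached to the even closed walks of the graph with loops `G(f)`. -/
theorem toric_ideal_generated_by_walks (k : Type*) [Field k] [CharZero k]
    {n m : ℕ} (ε : Fin m → Sym2 (Fin n)) (hinj : Function.Injective ε) :
    RingHom.ker (aeval (fmon k ε) : MvPolynomial (Fin m) k →ₐ[k] MvPolynomial (Fin n) k) =
      Ideal.span {p : MvPolynomial (Fin m) k |
        ∃ r : ℕ, 1 ≤ r ∧ ∃ (vtx : ZMod (2 * r) → Fin n) (eidx : ZMod (2 * r) → Fin m),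
          IsWalkIn ε vtx eidx ∧ p = pw k eidx} := by
  classical
  apply le_antisymm
  · intro F hF
    rw [RingHom.mem_ker] at hF
    exact PolarAux.ker_le ε F.support.card F le_rfl hF
  · rw [Ideal.span_le]
    rintro p ⟨r, hr, vtx, eidx, hwin, rfl⟩
    rw [SetLike.mem_coe, RingHom.mem_ker]
    exact PolarAux.pw_ker ε vtx eidx hwin
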